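/- Let Q be a real normed space, W a real inner product space, and b : Q × W → ℝ a bilinear map such that |b(q, w)| ≤ C_b ‖q‖ ‖w‖ for all q ∈ Q, w ∈ W, for some constant C_b > 0. Let P : W → W be a linear map satisfying ⟨Pw, w − Pw⟩ = 0 for all w ∈ W. Let C₁, C₂ > 0 and assume: (H1) for every w ∈ W there exists q ∈ Q with b(q, w) = b(q, w − Pw), b(q, w − Pw) ≥ C₁ ‖w − Pw‖², and ‖q‖ ≤ ‖w − Pw‖; (H2) for every w ∈ W there exists g ∈ Q with b(g, Pw) = ‖Pw‖² and ‖g‖ ≤ C₂ ‖Pw‖. Then for every w ∈ W there exists z ∈ Q with b(z, w) ≥ (C₁/(1 + C_b² C₂²)) ‖w‖² and ‖z‖ ≤ (1 + 2C₁C₂/(1 + C_b² C₂²)) ‖w‖. In particular b satisfies an inf-sup condition with a constant depending only on C₁, C₂, C_b. -/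

import Mathlib

open RealInnerProductSpace

/-- Abstract macroelement inf-sup theorem (Stenberg's argument): if `b` is a
bounded bilinear form, `P` is a projection-like map with
`⟪Pw, w − Pw⟫ = 0`, and the local estimate (H1) and global construction (H2)
hold, then `b` satisfies an inf-sup condition: for every `w` there is `z` with
`b(z, w) ≥ (C₁/(1 + C_b² C₂²)) ‖w‖²` and
`‖z‖ ≤ (1 + 2C₁C₂/(1 + C_b² C₂²)) ‖w‖`. -/
theorem abstract_macroelement_infsup
    {Q W : Type*} [NormedAddCommGroup Q] [NormedSpace ℝ Q]
    [NormedAddCommGroup W] [InnerProductSpace ℝ W]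
    (b : Q →ₗ[ℝ] W →ₗ[ℝ] ℝ) (Cb : ℝ) (hCb : 0 < Cb)
    (hb : ∀ (q : Q) (w : W), |b q w| ≤ Cb * ‖q‖ * ‖w‖)
    (P : W →ₗ[ℝ] W) (hP : ∀ w : W, ⟪P w, w - P w⟫ = 0)
    (C₁ C₂ : ℝ) (hC₁ : 0 < C₁) (hC₂ : 0 < C₂)
    (H1 : ∀ w : W, ∃ q : Q, b q w = b q (w - P w) ∧
      C₁ * ‖w - P w‖ ^ 2 ≤ b q (w - P w) ∧ ‖q‖ ≤ ‖w - P w‖)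
    (H2 : ∀ w : W, ∃ g : Q, b g (P w) = ‖P w‖ ^ 2 ∧ ‖g‖ ≤ C₂ * ‖P w‖) :
    ∀ w : W, ∃ z : Q,
      C₁ / (1 + Cb ^ 2 * C₂ ^ 2) * ‖w‖ ^ 2 ≤ b z w ∧
      ‖z‖ ≤ (1 + 2 * C₁ * C₂ / (1 + Cb ^ 2 * C₂ ^ 2)) * ‖w‖ := by
  intro w
  obtain ⟨q, hq1, hq2, hq3⟩ := H1 w
  obtain ⟨g, hg1, hg2⟩ := H2 w
  have hK0 : (0:ℝ) ≤ Cb ^ 2 * C₂ ^ 2 := by positivity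
  have hK1 : (0:ℝ) < 1 + Cb ^ 2 * C₂ ^ 2 := by positivity
  set β : ℝ := C₁ / (1 + Cb ^ 2 * C₂ ^ 2) with hβdef
  have hβ0 : 0 < β := by positivity
  have hβ : β * (1 + Cb ^ 2 * C₂ ^ 2) = C₁ := by
    rw [hβdef]; exact div_mul_cancel₀ C₁ hK1.ne'
  set a := ‖P w‖ with ha
  set c := ‖w - P w‖ with hc
  have ha0 : 0 ≤ a := norm_nonneg _
  have hc0 : 0 ≤ c := norm_nonneg _
  -- Pythagoras
  have pyth : ‖w‖ ^ 2 = a ^ 2 + c ^ 2 := by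
    have h := norm_add_sq_real (P w) (w - P w)
    rw [hP w] at h
    simpa [ha, hc] using h
  -- boundedness of b g on w - P w
  have hbg : |b g (w - P w)| ≤ Cb * C₂ * a * c := by
    have h1 := hb g (w - P w)
    have h2 : Cb * ‖g‖ * ‖w - P w‖ ≤ Cb * (C₂ * a) * c := by
      have := mul_le_mul_of_nonneg_left hg2 hCb.le
      exact mul_le_mul_of_nonneg_right this hc0
    calc |b g (w - P w)| ≤ Cb * ‖g‖ * ‖w - P w‖ := h1
      _ ≤ Cb * (C₂ * a) * c := h2
      _ = Cb * C₂ * a * c := by ring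
  have hbg' : -(Cb * C₂ * a * c) ≤ b g (w - P w) := neg_le_of_abs_le hbg
  refine ⟨q + (2 * β) • g, ?_, ?_⟩
  · have hsplit : (b g) w = (b g) (P w) + (b g) (w - P w) := by
      rw [← map_add]
      congr 1
      abel
    have hexp : b (q + (2 * β) • g) w = b q w + 2 * β * (b g) w := by
      simp [map_add, map_smul]
    rw [hexp, hsplit, hg1, hq1, pyth]
    nlinarith [sq_nonneg (a - Cb * C₂ * c), mul_nonneg hβ0.le (sq_nonneg (a - Cb * C₂ * c)), hq2, mul_nonneg hβ0.le (sq_nonneg c)]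
  · have haw : a ≤ ‖w‖ := by nlinarith [norm_nonneg w, sq_nonneg c]
    have hcw : c ≤ ‖w‖ := by nlinarith [norm_nonneg w, sq_nonneg a]
    have hrhs : (1 + 2 * C₁ * C₂ / (1 + Cb ^ 2 * C₂ ^ 2)) = 1 + 2 * β * C₂ := by
      rw [hβdef]; ring
    rw [hrhs]
    calc ‖q + (2 * β) • g‖ ≤ ‖q‖ + ‖(2 * β) • g‖ := norm_add_le _ _
      _ = ‖q‖ + |2 * β| * ‖g‖ := by rw [norm_smul, Real.norm_eq_abs]
      _ = ‖q‖ + 2 * β * ‖g‖ := by rw [abs_of_pos (by positivity)]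
      _ ≤ c + 2 * β * (C₂ * a) := by
          have := mul_le_mul_of_nonneg_left hg2 (by positivity : (0:ℝ) ≤ 2 * β)
          exact add_le_add hq3 this
      _ ≤ ‖w‖ + 2 * β * (C₂ * ‖w‖) := by
          have := mul_le_mul_of_nonneg_left (mul_le_mul_of_nonneg_left haw hC₂.le)
            (by positivity : (0:ℝ) ≤ 2 * β)
          exact add_le_add hcw this
      _ = (1 + 2 * β * C₂) * ‖w‖ := by ring
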